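/- Let C ⊆ ℝⁿ be a nonempty convex set. Then for any fixed x ∈ ℝⁿ, the map τ ↦ dist²(x, τC) is convex on [0, ∞). -/

import Mathlib

open Pointwise

/-- For a nonempty convex `C ⊆ ℝⁿ` and fixed `x`, the map `τ ↦ dist²(x, τC)` is convex
on `[0,∞)`. -/
theorem stmt16 (n : ℕ) (C : Set (EuclideanSpace ℝ (Fin n))) (hne : C.Nonempty)
    (hconv : Convex ℝ C) (x : EuclideanSpace ℝ (Fin n)) :
    ConvexOn ℝ (Set.Ici (0:ℝ)) (fun τ : ℝ => (Metric.infDist x (τ • C)) ^ 2) := by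
  have hconvf : ConvexOn ℝ (Set.Ici (0:ℝ)) (fun τ : ℝ => Metric.infDist x (τ • C)) := by
    refine ⟨convex_Ici 0, ?_⟩
    intro a ha b hb lam mu hl hm hlm
    simp only [Set.mem_Ici] at ha hb
    -- key: for z₁ ∈ a•C, z₂ ∈ b•C, lam•z₁ + mu•z₂ ∈ (lam*a + mu*b)•C
    have key : ∀ z₁ ∈ a • C, ∀ z₂ ∈ b • C,
        lam • z₁ + mu • z₂ ∈ (lam * a + mu * b) • C := by
      rintro _ ⟨y₁, hy₁, rfl⟩ _ ⟨y₂, hy₂, rfl⟩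
      rcases eq_or_lt_of_le (by positivity : (0:ℝ) ≤ lam * a + mu * b) with h0 | h0
      · have h1 : lam * a = 0 := by nlinarith [mul_nonneg hl ha, mul_nonneg hm hb]
        have h2 : mu * b = 0 := by nlinarith [mul_nonneg hl ha, mul_nonneg hm hb]
        refine ⟨y₁, hy₁, ?_⟩
        show (lam * a + mu * b) • y₁ = lam • a • y₁ + mu • b • y₂
        rw [smul_smul, smul_smul, ← h0, h1, h2]
        simp
      · set t := lam * a + mu * b with ht
        refine ⟨(lam * a / t) • y₁ + (mu * b / t) • y₂,
          hconv hy₁ hy₂ (by positivity) (by positivity) ?_, ?_⟩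
        · field_simp
          exact ht.symm
        · show t • ((lam * a / t) • y₁ + (mu * b / t) • y₂) = lam • a • y₁ + mu • b • y₂
          rw [smul_add, smul_smul, smul_smul, smul_smul, smul_smul,
            mul_div_cancel₀ _ h0.ne', mul_div_cancel₀ _ h0.ne']
    have hne1 : (a • C).Nonempty := hne.smul_set
    have hne2 : (b • C).Nonempty := hne.smul_set
    rw [← sub_nonneg]
    by_contra hlt
    push_neg at hlt
    rw [sub_neg] at hlt
    set ε := (Metric.infDist x ((lam * a + mu * b) • C)
      - (lam * Metric.infDist x (a • C) + mu * Metric.infDist x (b • C))) with hε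
    have hεpos : 0 < ε := by simpa [hε] using sub_pos.mpr hlt
    obtain ⟨z₁, hz₁, hd₁⟩ := (Metric.infDist_lt_iff hne1).mp
      (show Metric.infDist x (a • C) < Metric.infDist x (a • C) + ε/2 by linarith)
    obtain ⟨z₂, hz₂, hd₂⟩ := (Metric.infDist_lt_iff hne2).mp
      (show Metric.infDist x (b • C) < Metric.infDist x (b • C) + ε/2 by linarith)
    have hmem := key z₁ hz₁ z₂ hz₂
    have hle : Metric.infDist x ((lam * a + mu * b) • C) ≤ dist x (lam • z₁ + mu • z₂) :=
      Metric.infDist_le_dist_of_mem hmem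
    have hdist : dist x (lam • z₁ + mu • z₂) ≤ lam * dist x z₁ + mu * dist x z₂ := by
      have : x = lam • x + mu • x := by rw [← add_smul, hlm, one_smul]
      calc dist x (lam • z₁ + mu • z₂)
          = ‖(lam • x + mu • x) - (lam • z₁ + mu • z₂)‖ := by rw [← this, dist_eq_norm]
        _ = ‖lam • (x - z₁) + mu • (x - z₂)‖ := by congr 1; module
        _ ≤ ‖lam • (x - z₁)‖ + ‖mu • (x - z₂)‖ := norm_add_le _ _
        _ = lam * dist x z₁ + mu * dist x z₂ := by
            rw [norm_smul, norm_smul, dist_eq_norm, dist_eq_norm,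
              Real.norm_of_nonneg hl, Real.norm_of_nonneg hm]
    have e1 : lam * dist x z₁ ≤ lam * (Metric.infDist x (a • C) + ε/2) :=
      mul_le_mul_of_nonneg_left hd₁.le hl
    have e2 : mu * dist x z₂ ≤ mu * (Metric.infDist x (b • C) + ε/2) :=
      mul_le_mul_of_nonneg_left hd₂.le hm
    nlinarith [e1, e2, hε, hεpos, hle, hdist]
  exact hconvf.pow (fun τ _ => Metric.infDist_nonneg) 2
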